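/- arXiv:1509.00537 — 5 statements merged into one kernel-verified Lean document; each statement's English description precedes it below -/
import Mathlib

section
/- If X and Y are n×n real symmetric matrices and A is an invertible n×n real matrix, then the linear map X ↦ A X Aᵀ on the space of symmetric matrices has Jacobian determinant of absolute value |det(A)|^{n+1}. -/
open Matrix

/-- The real vector space of `n × n` real symmetric matrices. -/
def symmSub (n : ℕ) : Submodule ℝ (Matrix (Fin n) (Fin n) ℝ) where
  carrier := {X | X.IsSymm}
  add_mem' := by
    intro a b ha hb
    simp only [Set.mem_setOf_eq, Matrix.IsSymm, Matrix.transpose_add] at *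
    rw [ha, hb]
  zero_mem' := by simp [Matrix.IsSymm]
  smul_mem' := by
    intro c a ha
    simp only [Set.mem_setOf_eq, Matrix.IsSymm, Matrix.transpose_smul] at *
    rw [ha]

/-- The congruence map `X ↦ A X Aᵀ` on the space of symmetric matrices. -/
noncomputable def congrSymm (n : ℕ) (A : Matrix (Fin n) (Fin n) ℝ) :
    symmSub n →ₗ[ℝ] symmSub n where
  toFun X := ⟨A * X.1 * Aᵀ, by
    have hX : (X.1)ᵀ = X.1 := X.2
    show (A * X.1 * Aᵀ)ᵀ = A * X.1 * Aᵀ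
    simp [Matrix.transpose_mul, Matrix.mul_assoc, hX]⟩
  map_add' X Y := Subtype.ext (by simp [Matrix.mul_add, Matrix.add_mul])
  map_smul' c X := Subtype.ext (by simp [Matrix.mul_smul, Matrix.smul_mul])

/-! ### Auxiliary lemmas -/

lemma symmSub_symm {n : ℕ} (X : symmSub n) (i j : Fin n) : X.1 j i = X.1 i j := by
  have h : (X.1)ᵀ = X.1 := X.2
  conv_rhs => rw [← h]
  rfl

lemma congrSymm_apply_coe (n : ℕ) (A : Matrix (Fin n) (Fin n) ℝ) (X : symmSub n) :
    (congrSymm n A X : Matrix (Fin n) (Fin n) ℝ) = A * X.1 * Aᵀ := rfl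

lemma congrSymm_mul (n : ℕ) (A B : Matrix (Fin n) (Fin n) ℝ) :
    congrSymm n (A * B) = (congrSymm n A).comp (congrSymm n B) := by
  apply LinearMap.ext
  intro X
  apply Subtype.ext
  simp [congrSymm_apply_coe, Matrix.transpose_mul, Matrix.mul_assoc]

lemma congrSymm_one (n : ℕ) : congrSymm n 1 = LinearMap.id := by
  apply LinearMap.ext
  intro X
  apply Subtype.ext
  simp [congrSymm_apply_coe]

/-- Linear equivalence between symmetric matrices and functions on pairs `i ≤ j`. -/
noncomputable def symmEquiv (n : ℕ) :
    symmSub n ≃ₗ[ℝ] ({p : Fin n × Fin n // p.1 ≤ p.2} → ℝ) where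
  toFun X p := X.1 p.1.1 p.1.2
  map_add' _ _ := rfl
  map_smul' _ _ := rfl
  invFun v := ⟨Matrix.of fun i j =>
      if h : i ≤ j then v ⟨(i, j), h⟩ else v ⟨(j, i), le_of_not_ge h⟩, by
    show Matrix.IsSymm _
    apply Matrix.IsSymm.ext
    intro i j
    simp only [Matrix.of_apply]
    rcases le_or_gt i j with h | h
    · rcases le_or_gt j i with h' | h'
      · have : i = j := le_antisymm h h'
        subst this; rfl
      · rw [dif_pos h, dif_neg (not_le.2 h')]
    · rw [dif_neg (not_le.2 h), dif_pos h.le]⟩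
  left_inv X := by
    apply Subtype.ext
    ext i j
    simp only [Matrix.of_apply]
    rcases le_or_gt i j with h | h
    · rw [dif_pos h]
    · rw [dif_neg (not_le.2 h)]
      exact symmSub_symm X i j
  right_inv v := by
    funext p
    obtain ⟨⟨i, j⟩, h⟩ := p
    simp only [Matrix.of_apply]
    rw [dif_pos h]

lemma congrSymm_diagonal_det (n : ℕ) (D : Fin n → ℝ) :
    LinearMap.det (congrSymm n (Matrix.diagonal D)) =
      ∏ p : {p : Fin n × Fin n // p.1 ≤ p.2}, (D p.1.1 * D p.1.2) := by
  set c : {p : Fin n × Fin n // p.1 ≤ p.2} → ℝ := fun p => D p.1.1 * D p.1.2 with hc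
  have key : congrSymm n (Matrix.diagonal D) =
      ((symmEquiv n).symm : ({p : Fin n × Fin n // p.1 ≤ p.2} → ℝ) →ₗ[ℝ] symmSub n) ∘ₗ
        (Matrix.toLin' (Matrix.diagonal c)) ∘ₗ
        (((symmEquiv n).symm.symm : symmSub n ≃ₗ[ℝ] _) : symmSub n →ₗ[ℝ] _) := by
    apply LinearMap.ext
    intro X
    apply (symmEquiv n).injective
    funext p
    obtain ⟨⟨i, j⟩, h⟩ := p
    show (Matrix.diagonal D * X.1 * (Matrix.diagonal D)ᵀ) i j = _
    simp only [LinearMap.coe_comp, Function.comp_apply, LinearEquiv.coe_coe,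
      LinearEquiv.symm_symm, LinearEquiv.apply_symm_apply]
    rw [Matrix.toLin'_apply, Matrix.mulVec_diagonal]
    show _ = c ⟨(i, j), h⟩ * X.1 i j
    rw [Matrix.diagonal_transpose, Matrix.mul_diagonal, Matrix.diagonal_mul, hc]
    ring
  rw [key, LinearMap.det_conj, LinearMap.det_toLin', Matrix.det_diagonal]

lemma prod_pairs_sq (n : ℕ) (D : Fin n → ℝ) :
    (∏ p : {p : Fin n × Fin n // p.1 ≤ p.2}, (D p.1.1 * D p.1.2)) ^ 2 =
      (∏ i, D i) ^ (2 * (n + 1)) := by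
  classical
  set f : Fin n × Fin n → ℝ := fun p => D p.1 * D p.2 with hf
  set S : Finset (Fin n × Fin n) := Finset.univ.filter (fun p => p.1 ≤ p.2) with hS
  set S' : Finset (Fin n × Fin n) := Finset.univ.filter (fun p => p.2 ≤ p.1) with hS'
  have h1 : (∏ p : {p : Fin n × Fin n // p.1 ≤ p.2}, (D p.1.1 * D p.1.2)) = ∏ p ∈ S, f p := by
    rw [hS]
    exact (Finset.prod_subtype _ (by simp) f).symm
  have h2 : ∏ p ∈ S, f p = ∏ p ∈ S', f p := by
    apply Finset.prod_nbij' (fun p => Prod.swap p) (fun p => Prod.swap p)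
    · intro p hp; simp only [hS, hS', Finset.mem_filter] at *; exact ⟨Finset.mem_univ _, hp.2⟩
    · intro p hp; simp only [hS, hS', Finset.mem_filter] at *; exact ⟨Finset.mem_univ _, hp.2⟩
    · intro p _; simp
    · intro p _; simp
    · intro p _; simp [hf, mul_comm]
  have hunion : S ∪ S' = Finset.univ := by
    ext p; simp [hS, hS', le_total]
  have hinter : S ∩ S' = Finset.univ.filter (fun p => p.1 = p.2) := by
    ext p
    simp only [hS, hS', Finset.mem_inter, Finset.mem_filter, Finset.mem_univ, true_and]
    constructor
    · rintro ⟨h, h'⟩; exact le_antisymm h h'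
    · rintro h; exact ⟨le_of_eq h, ge_of_eq h⟩
  have huniv : ∏ p : Fin n × Fin n, f p = ((∏ i, D i)) ^ n * ((∏ i, D i)) ^ n := by
    have : ∏ p : Fin n × Fin n, f p =
        (∏ p : Fin n × Fin n, D p.1) * (∏ p : Fin n × Fin n, D p.2) :=
      Finset.prod_mul_distrib
    rw [this]
    congr 1
    · rw [Fintype.prod_prod_type]
      simp [Finset.prod_pow]
    · rw [Fintype.prod_prod_type]
      rw [Finset.prod_comm]
      simp [Finset.prod_pow]
  have hdiag : ∏ p ∈ Finset.univ.filter (fun p : Fin n × Fin n => p.1 = p.2), f p =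
      (∏ i, D i) ^ 2 := by
    rw [Finset.prod_filter]
    rw [Fintype.prod_prod_type]
    have : ∀ a : Fin n, (∏ b, if a = b then f (a, b) else 1) = D a * D a := by
      intro a
      rw [Finset.prod_ite_eq]
      simp [hf]
    rw [Finset.prod_congr rfl (fun a _ => this a)]
    rw [Finset.prod_mul_distrib]
    ring
  have key : (∏ p ∈ S, f p) * (∏ p ∈ S', f p) = (∏ i, D i) ^ (2 * (n + 1)) := by
    rw [← Finset.prod_union_inter, hunion, hinter, hdiag]
    have : ∏ p ∈ Finset.univ, f p = ∏ p : Fin n × Fin n, f p := rfl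
    rw [this, huniv]
    ring
  rw [h1, sq, ← key, h2]

lemma diag_conj_transvection (n : ℕ) (i j : Fin n) (hij : i ≠ j) (c : ℝ) :
    Matrix.diagonal (fun k => if k = j then (-1 : ℝ) else 1) * Matrix.transvection i j c *
      Matrix.diagonal (fun k => if k = j then (-1 : ℝ) else 1) = Matrix.transvection i j (-c) := by
  ext a b
  simp only [Matrix.mul_diagonal, Matrix.diagonal_mul, Matrix.transvection, Matrix.add_apply,
    Matrix.one_apply, Matrix.single]
  split_ifs <;> simp_all <;> split_ifs <;> simp_all [eq_comm]

lemma abs_congrSymm_transvection (n : ℕ) (i j : Fin n) (hij : i ≠ j) (c : ℝ) :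
    |LinearMap.det (congrSymm n (Matrix.transvection i j c))| = 1 := by
  set φ : Matrix (Fin n) (Fin n) ℝ → ℝ := fun M => LinearMap.det (congrSymm n M) with hφ
  have hφmul : ∀ A B, φ (A * B) = φ A * φ B := by
    intro A B
    rw [hφ]
    simp only
    rw [congrSymm_mul, LinearMap.det_comp]
  have hφone : φ 1 = 1 := by
    rw [hφ]
    simp only
    rw [congrSymm_one, LinearMap.det_id]
  set P : Matrix (Fin n) (Fin n) ℝ :=
    Matrix.diagonal (fun k => if k = j then (-1 : ℝ) else 1) with hP
  have hPP : P * P = 1 := by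
    rw [hP, Matrix.diagonal_mul_diagonal]
    have : (fun i => (if i = j then (-1:ℝ) else 1) * (if i = j then (-1:ℝ) else 1)) =
        fun _ => (1:ℝ) := by
      funext k; by_cases h : k = j <;> simp [h]
    rw [this, Matrix.diagonal_one]
  have hPsq : φ P * φ P = 1 := by rw [← hφmul, hPP, hφone]
  have hneg : φ (Matrix.transvection i j (-c)) = φ (Matrix.transvection i j c) := by
    rw [← diag_conj_transvection n i j hij c, hφmul, hφmul]
    calc φ P * φ (Matrix.transvection i j c) * φ P
        = (φ P * φ P) * φ (Matrix.transvection i j c) := by ring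
      _ = φ (Matrix.transvection i j c) := by rw [hPsq, one_mul]
  have hTT : φ (Matrix.transvection i j c) * φ (Matrix.transvection i j (-c)) = 1 := by
    rw [← hφmul, Matrix.transvection_mul_transvection_same _ _ hij, add_neg_cancel,
      Matrix.transvection_zero, hφone]
  rw [hneg] at hTT
  have habs : |φ (Matrix.transvection i j c)| ^ 2 = 1 := by
    rw [sq, ← abs_mul, hTT, abs_one]
  have h0 : (0:ℝ) ≤ |φ (Matrix.transvection i j c)| := abs_nonneg _
  nlinarith [habs, h0]

lemma abs_congrSymm_diagonal (n : ℕ) (D : Fin n → ℝ) :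
    |LinearMap.det (congrSymm n (Matrix.diagonal D))| = |(Matrix.diagonal D).det| ^ (n + 1) := by
  rw [congrSymm_diagonal_det, Matrix.det_diagonal]
  have hsq := prod_pairs_sq n D
  have h1 : |∏ p : {p : Fin n × Fin n // p.1 ≤ p.2}, (D p.1.1 * D p.1.2)| =
      Real.sqrt ((∏ p : {p : Fin n × Fin n // p.1 ≤ p.2}, (D p.1.1 * D p.1.2)) ^ 2) :=
    (Real.sqrt_sq_eq_abs _).symm
  rw [h1, hsq]
  have : (∏ i, D i) ^ (2 * (n + 1)) = ((∏ i, D i) ^ (n + 1)) ^ 2 := by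
    rw [← pow_mul]
    ring_nf
  rw [this, Real.sqrt_sq_eq_abs, abs_pow]

/-- For invertible `A ∈ GL(n, ℝ)`, the linear map `X ↦ A X Aᵀ` on the space of `n × n` real
symmetric matrices has Jacobian determinant of absolute value `|det A|^{n+1}`. -/
theorem stmt_2 (n : ℕ) (A : Matrix (Fin n) (Fin n) ℝ) (hA : IsUnit A.det) :
    |LinearMap.det (congrSymm n A)| = |A.det| ^ (n + 1) := by
  have hdet : A.det ≠ 0 := by
    intro h
    rw [h] at hA
    exact not_isUnit_zero hA
  apply Matrix.diagonal_transvection_induction_of_det_ne_zero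
    (P := fun M => |LinearMap.det (congrSymm n M)| = |M.det| ^ (n + 1)) _ hdet
  · intro D _
    exact abs_congrSymm_diagonal n D
  · intro t
    have h := abs_congrSymm_transvection n t.i t.j t.hij t.c
    have hm : t.toMatrix = Matrix.transvection t.i t.j t.c := rfl
    rw [hm, h, Matrix.det_transvection_of_ne _ _ t.hij, abs_one, one_pow]
  · intro B C _ _ hB hC
    rw [congrSymm_mul, LinearMap.det_comp, Matrix.det_mul, abs_mul, abs_mul, mul_pow, hB, hC]
end

section
/- If X is an n×n real skew-symmetric matrix and A is an invertible n×n real matrix, then the linear map X ↦ A X Aᵀ on the space of skew-symmetric matrices has Jacobian determinant of absolute value |det(A)|^{n-1}. -/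
open Matrix

/-- The real vector space of `n × n` real skew-symmetric matrices. -/
def skewSub (n : ℕ) : Submodule ℝ (Matrix (Fin n) (Fin n) ℝ) where
  carrier := {X | Xᵀ = -X}
  add_mem' := by
    intro a b ha hb
    simp only [Set.mem_setOf_eq, Matrix.transpose_add] at *
    rw [ha, hb, neg_add]
  zero_mem' := by simp
  smul_mem' := by
    intro c a ha
    simp only [Set.mem_setOf_eq, Matrix.transpose_smul] at *
    rw [ha, smul_neg]

/-- The congruence map `X ↦ A X Aᵀ` on the space of skew-symmetric matrices. -/
noncomputable def congrSkew (n : ℕ) (A : Matrix (Fin n) (Fin n) ℝ) :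
    skewSub n →ₗ[ℝ] skewSub n where
  toFun X := ⟨A * X.1 * Aᵀ, by
    have hX : (X.1)ᵀ = -X.1 := X.2
    show (A * X.1 * Aᵀ)ᵀ = -(A * X.1 * Aᵀ)
    simp [Matrix.transpose_mul, Matrix.mul_assoc, hX, Matrix.mul_neg, Matrix.neg_mul]⟩
  map_add' X Y := Subtype.ext (by simp [Matrix.mul_add, Matrix.add_mul])
  map_smul' c X := Subtype.ext (by simp [Matrix.mul_smul, Matrix.smul_mul])

abbrev skewIdx (n : ℕ) := {p : Fin n × Fin n // p.1 < p.2}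

noncomputable def skewEquiv (n : ℕ) : skewSub n ≃ₗ[ℝ] (skewIdx n → ℝ) where
  toFun X p := X.1 p.1.1 p.1.2
  map_add' X Y := rfl
  map_smul' c X := rfl
  invFun c := ⟨Matrix.of fun i j =>
      if h : i < j then c ⟨(i, j), h⟩ else if h' : j < i then -c ⟨(j, i), h'⟩ else 0, by
    show _ = _
    ext i j
    simp only [Matrix.transpose_apply, Matrix.neg_apply, Matrix.of_apply]
    rcases lt_trichotomy i j with h | h | h
    · rw [dif_neg (not_lt_of_gt h), dif_pos h, dif_pos h]
    · subst h; simp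
    · rw [dif_pos h, dif_neg (not_lt_of_gt h), dif_pos h, neg_neg]⟩
  left_inv X := by
    apply Subtype.ext
    ext i j
    have hX : ∀ a b, X.1 b a = -X.1 a b := by
      intro a b
      have := X.2
      have : (X.1)ᵀ = -X.1 := this
      calc X.1 b a = (X.1)ᵀ a b := rfl
        _ = -X.1 a b := by rw [this]; rfl
    simp only [Matrix.of_apply]
    rcases lt_trichotomy i j with h | h | h
    · rw [dif_pos h]
    · subst h
      rw [dif_neg (lt_irrefl i), dif_neg (lt_irrefl i)]
      have := hX i i
      linarith
    · rw [dif_neg (not_lt_of_gt h), dif_pos h, hX j i]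
  right_inv c := by
    funext p
    show (Matrix.of _ : Matrix (Fin n) (Fin n) ℝ) p.1.1 p.1.2 = c p
    simp only [Matrix.of_apply]
    rw [dif_pos p.2]

noncomputable def skewBasis (n : ℕ) : Module.Basis (skewIdx n) ℝ (skewSub n) :=
  Module.Basis.ofEquivFun (skewEquiv n)

lemma detCS_diagonal (n : ℕ) (v : Fin n → ℝ) :
    LinearMap.det (congrSkew n (Matrix.diagonal v))
      = ∏ p : skewIdx n, v p.1.1 * v p.1.2 := by
  rw [← LinearMap.det_toMatrix (skewBasis n)]
  have hmat : LinearMap.toMatrix (skewBasis n) (skewBasis n) (congrSkew n (Matrix.diagonal v))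
      = Matrix.diagonal (fun p : skewIdx n => v p.1.1 * v p.1.2) := by
    ext q p
    rw [LinearMap.toMatrix_apply]
    rw [show skewBasis n = Module.Basis.ofEquivFun (skewEquiv n) from rfl,
      Module.Basis.ofEquivFun_repr_apply]
    have hb : ((Module.Basis.ofEquivFun (skewEquiv n)) p : skewSub n)
        = (skewEquiv n).symm (Pi.single p 1) := by
      rw [Module.Basis.coe_ofEquivFun]
    rw [hb]
    show (Matrix.diagonal v * ((skewEquiv n).symm (Pi.single p 1)).1 * (Matrix.diagonal v)ᵀ)
        q.1.1 q.1.2 = _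
    rw [Matrix.diagonal_transpose, Matrix.mul_diagonal, Matrix.diagonal_mul]
    have hentry : (((skewEquiv n).symm (Pi.single p 1)).1) q.1.1 q.1.2
        = if q = p then 1 else 0 := by
      show (Matrix.of _ : Matrix (Fin n) (Fin n) ℝ) q.1.1 q.1.2 = _
      simp only [Matrix.of_apply]
      rw [dif_pos q.2]
      have : (⟨(q.1.1, q.1.2), q.2⟩ : skewIdx n) = q := rfl
      rw [this, Pi.single_apply]
    rw [hentry]
    by_cases h : q = p
    · subst h; simp [Matrix.diagonal_apply_eq]
    · simp [Matrix.diagonal_apply_ne _ h, h]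
  rw [hmat, Matrix.det_diagonal]

lemma detCS_mul' (n : ℕ) (A B : Matrix (Fin n) (Fin n) ℝ) :
    LinearMap.det (congrSkew n (A * B))
      = LinearMap.det (congrSkew n A) * LinearMap.det (congrSkew n B) := by
  have : congrSkew n (A * B) = (congrSkew n A).comp (congrSkew n B) := by
    ext X : 2
    show ((A * B) * X.1 * (A * B)ᵀ : Matrix _ _ ℝ) = A * (B * X.1 * Bᵀ) * Aᵀ
    simp [Matrix.transpose_mul, Matrix.mul_assoc]
  rw [this, LinearMap.det_comp]

lemma detCS_one' (n : ℕ) :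
    LinearMap.det (congrSkew n (1 : Matrix (Fin n) (Fin n) ℝ)) = 1 := by
  have : congrSkew n (1 : Matrix (Fin n) (Fin n) ℝ) = LinearMap.id := by
    ext X : 2
    show ((1 : Matrix (Fin n) (Fin n) ℝ) * X.1 * (1 : Matrix (Fin n) (Fin n) ℝ)ᵀ) = X.1
    simp
  rw [this, LinearMap.det_id]

lemma abs_detCS_transvection (n : ℕ) (t : Matrix.TransvectionStruct (Fin n) ℝ) :
    |LinearMap.det (congrSkew n t.toMatrix)| = 1 := by
  obtain ⟨i, j, hij, c⟩ := t
  set S : Matrix (Fin n) (Fin n) ℝ := Matrix.diagonal (fun k => if k = j then -1 else 1) with hS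
  have hSS : S * S = 1 := by
    rw [hS, Matrix.diagonal_mul_diagonal]
    ext a b
    by_cases h : a = b
    · subst h
      rw [Matrix.diagonal_apply_eq, Matrix.one_apply_eq]
      split_ifs <;> norm_num
    · rw [Matrix.diagonal_apply_ne _ h, Matrix.one_apply_ne h]
  have hE : S * Matrix.single i j c * S = Matrix.single i j (-c) := by
    ext a b
    rw [hS]
    rw [Matrix.mul_diagonal, Matrix.diagonal_mul]
    rcases eq_or_ne a i with rfl | ha
    · rcases eq_or_ne b j with rfl | hb
      · simp [Matrix.single, hij]
      · simp [Matrix.single, Ne.symm hb]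
    · simp [Matrix.single, Ne.symm ha]
  have hconj : S * Matrix.transvection i j c * S = Matrix.transvection i j (-c) := by
    rw [Matrix.transvection, Matrix.transvection, Matrix.mul_add, Matrix.add_mul,
      Matrix.mul_one, hSS, hE]
  have h1 : LinearMap.det (congrSkew n (Matrix.transvection i j c)) *
      LinearMap.det (congrSkew n (Matrix.transvection i j (-c))) = 1 := by
    rw [← detCS_mul', Matrix.transvection_mul_transvection_same i j hij, add_neg_cancel,
      Matrix.transvection_zero, detCS_one']
  have h2 : LinearMap.det (congrSkew n (Matrix.transvection i j (-c)))
      = LinearMap.det (congrSkew n S) * LinearMap.det (congrSkew n (Matrix.transvection i j c)) *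
        LinearMap.det (congrSkew n S) := by
    rw [← hconj, detCS_mul', detCS_mul']
  have h3 : LinearMap.det (congrSkew n S) * LinearMap.det (congrSkew n S) = 1 := by
    rw [← detCS_mul', hSS, detCS_one']
  show |LinearMap.det (congrSkew n (Matrix.transvection i j c))| = 1
  have hsq : LinearMap.det (congrSkew n (Matrix.transvection i j c)) *
      LinearMap.det (congrSkew n (Matrix.transvection i j c)) = 1 := by
    rw [h2] at h1
    nlinarith [h3, h1]
  rcases mul_self_eq_one_iff.mp hsq with h | h <;> rw [h] <;> norm_num

lemma abs_detCS_list (n : ℕ) (L : List (Matrix.TransvectionStruct (Fin n) ℝ)) :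
    |LinearMap.det (congrSkew n (L.map Matrix.TransvectionStruct.toMatrix).prod)| = 1 := by
  induction L with
  | nil => simp [detCS_one']
  | cons t L ih =>
    rw [List.map_cons, List.prod_cons, detCS_mul', abs_mul, abs_detCS_transvection n t, ih,
      one_mul]

lemma sq_prod_pairs (n : ℕ) (v : Fin n → ℝ) :
    (∏ p : skewIdx n, v p.1.1 * v p.1.2) ^ 2 * (∏ i, v i) ^ 2 = (∏ i, v i) ^ (2 * n) := by
  classical
  set f : Fin n × Fin n → ℝ := fun p => v p.1 * v p.2 with hf
  have htot : ∏ p : Fin n × Fin n, f p = (∏ i, v i) ^ (2 * n) := by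
    rw [Fintype.prod_prod_type]
    have : ∀ a : Fin n, ∏ b, f (a, b) = v a ^ n * ∏ i, v i := by
      intro a
      rw [hf]
      simp only
      rw [Finset.prod_mul_distrib, Finset.prod_const, Finset.card_univ, Fintype.card_fin]
    rw [Finset.prod_congr rfl fun a _ => this a, Finset.prod_mul_distrib, Finset.prod_pow,
      Finset.prod_const, Finset.card_univ, Fintype.card_fin, ← pow_add, two_mul]
  have h1 := Finset.prod_filter_mul_prod_filter_not Finset.univ
    (fun p : Fin n × Fin n => p.1 = p.2) f
  have h2 := Finset.prod_filter_mul_prod_filter_not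
    (Finset.univ.filter fun p : Fin n × Fin n => ¬p.1 = p.2)
    (fun p : Fin n × Fin n => p.1 < p.2) f
  have hdiag : ∏ p ∈ Finset.univ.filter (fun p : Fin n × Fin n => p.1 = p.2), f p
      = (∏ i, v i) ^ 2 := by
    rw [show ((∏ i, v i) ^ 2) = ∏ i : Fin n, (v i * v i) by
      rw [Finset.prod_mul_distrib, sq]]
    refine Finset.prod_nbij' (fun p => p.1) (fun i => (i, i)) ?_ ?_ ?_ ?_ ?_
    · intro a _; exact Finset.mem_univ _
    · intro a _; simp
    · intro a ha
      simp only [Finset.mem_filter] at ha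
      ext <;> simp [ha.2.symm]
    · intro a _; rfl
    · intro a ha
      simp only [Finset.mem_filter] at ha
      rw [hf]; simp only; rw [ha.2]
  have hlt : (Finset.univ.filter fun p : Fin n × Fin n => ¬p.1 = p.2).filter
      (fun p : Fin n × Fin n => p.1 < p.2)
      = Finset.univ.filter fun p : Fin n × Fin n => p.1 < p.2 := by
    rw [Finset.filter_filter]
    apply Finset.filter_congr
    intro p _
    simp only [and_iff_right_iff_imp]
    intro h
    exact ne_of_lt h
  have hgt : (Finset.univ.filter fun p : Fin n × Fin n => ¬p.1 = p.2).filter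
      (fun p : Fin n × Fin n => ¬p.1 < p.2)
      = Finset.univ.filter fun p : Fin n × Fin n => p.2 < p.1 := by
    rw [Finset.filter_filter]
    apply Finset.filter_congr
    intro p _
    constructor
    · rintro ⟨hne, hnlt⟩
      exact lt_of_le_of_ne (le_of_not_gt hnlt) (Ne.symm hne)
    · intro h
      exact ⟨ne_of_gt h, not_lt_of_gt h⟩
  have hswap : ∏ p ∈ Finset.univ.filter (fun p : Fin n × Fin n => p.2 < p.1), f p
      = ∏ p ∈ Finset.univ.filter (fun p : Fin n × Fin n => p.1 < p.2), f p := by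
    refine Finset.prod_nbij' Prod.swap Prod.swap ?_ ?_ ?_ ?_ ?_
    · intro a ha; simp only [Finset.mem_filter] at *; exact ⟨Finset.mem_univ _, ha.2⟩
    · intro a ha; simp only [Finset.mem_filter] at *; exact ⟨Finset.mem_univ _, ha.2⟩
    · intro a _; simp
    · intro a _; simp
    · intro a _; rw [hf]; simp only [Prod.fst_swap, Prod.snd_swap]; ring
  have hX : (∏ p : skewIdx n, v p.1.1 * v p.1.2)
      = ∏ p ∈ Finset.univ.filter (fun p : Fin n × Fin n => p.1 < p.2), f p := by
    exact (Finset.prod_subtype (p := fun p : Fin n × Fin n => p.1 < p.2)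
      (Finset.univ.filter fun p : Fin n × Fin n => p.1 < p.2) (by intro x; simp) f).symm
  rw [hlt, hgt, hswap] at h2
  rw [hX, ← htot, ← h1, ← h2, hdiag]
  ring

/-- For invertible `A ∈ GL(n, ℝ)`, the linear map `X ↦ A X Aᵀ` on the space of `n × n` real
skew-symmetric matrices has Jacobian determinant of absolute value `|det A|^{n-1}`. -/
theorem stmt_3 (n : ℕ) (A : Matrix (Fin n) (Fin n) ℝ) (hA : IsUnit A.det) :
    |LinearMap.det (congrSkew n A)| = |A.det| ^ (n - 1) := by
  rcases Nat.eq_zero_or_pos n with hn | hn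
  · subst hn
    have h0 : congrSkew 0 A = LinearMap.id := Subsingleton.elim _ _
    rw [h0, LinearMap.det_id]
    simp
  obtain ⟨L, L', D, hADL⟩ := Matrix.Pivot.exists_list_transvec_mul_diagonal_mul_list_transvec A
  have hdetA : A.det = ∏ i, D i := by
    rw [hADL]
    simp [Matrix.det_mul, Matrix.det_diagonal]
  have hP : (∏ i, D i) ≠ 0 := by rw [← hdetA]; exact hA.ne_zero
  have habs : |LinearMap.det (congrSkew n A)| = |∏ p : skewIdx n, D p.1.1 * D p.1.2| := by
    rw [hADL, detCS_mul', detCS_mul', abs_mul, abs_mul, abs_detCS_list, abs_detCS_list,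
      detCS_diagonal, one_mul, mul_one]
  have hsq := sq_prod_pairs n D
  have h2 : (∏ p : skewIdx n, D p.1.1 * D p.1.2) ^ 2 = ((∏ i, D i) ^ (n - 1)) ^ 2 := by
    apply mul_right_cancel₀ (pow_ne_zero 2 hP)
    rw [hsq, ← pow_mul, ← pow_add]
    congr 1
    omega
  have h3 : |∏ p : skewIdx n, D p.1.1 * D p.1.2| = |∏ i, D i| ^ (n - 1) := by
    have := (sq_eq_sq_iff_abs_eq_abs _ _).mp h2
    rw [this, abs_pow]
  rw [habs, hdetA, h3]
end

section
/- The normalized joint eigenvalue density integral over the torus: (1/((2π)^n n!)) ∫_{[0,2π]^n} ∏_{1≤i<j≤n} |e^{iθ_i} - e^{iθ_j}|² dθ₁⋯dθ_n = 1; equivalently ∫_{[0,2π]^n} ∏_{i<j} |e^{iθ_i} - e^{iθ_j}|² dθ = (2π)^n n!. -/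
open MeasureTheory Complex Finset

private lemma prod_pairs' {M : Type*} [CommMonoid M] {n : ℕ} (f : Fin n → Fin n → M) :
    ∏ p ∈ univ.filter (fun p : Fin n × Fin n => p.1 < p.2), f p.1 p.2
      = ∏ i, ∏ j ∈ Ioi i, f i j := by
  rw [Finset.prod_filter, ← Finset.univ_product_univ, Finset.prod_product]
  refine Finset.prod_congr rfl fun i _ => ?_
  rw [← Finset.prod_filter]
  congr 1
  ext j
  simp

private lemma integral_char' (c : ℤ) :
    ∫ t in Set.Icc (0:ℝ) (2*Real.pi), Complex.exp (Complex.I * c * t) =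
      if c = 0 then ((2*Real.pi : ℝ) : ℂ) else 0 := by
  split_ifs with h
  · simp [h, Real.pi_pos.le, Real.two_pi_pos.le, Measure.restrict_apply]
  · rw [MeasureTheory.integral_Icc_eq_integral_Ioc,
      ← intervalIntegral.integral_of_le Real.two_pi_pos.le,
      integral_exp_mul_complex (by simp [h, Complex.I_ne_zero])]
    have : Complex.I * c * ((2*Real.pi : ℝ) : ℂ) = c * (2 * Real.pi * Complex.I) := by
      push_cast; ring
    rw [this, Complex.exp_int_mul_two_pi_mul_I]
    simp

private lemma prod_perm_pow' {n : ℕ} (v : Fin n → ℂ) (σ : Equiv.Perm (Fin n)) :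
    ∏ i, v (σ i) ^ (i : ℕ) = ∏ j, v j ^ ((σ⁻¹ j : Fin n) : ℕ) := by
  rw [← Equiv.prod_comp σ (fun j => v j ^ ((σ⁻¹ j : Fin n) : ℕ))]
  simp

private lemma char_combine' (t : ℝ) (a b : ℕ) :
    Complex.exp (Complex.I * t) ^ a * ((starRingEnd ℂ) (Complex.exp (Complex.I * t))) ^ b
      = Complex.exp (Complex.I * ((a : ℤ) - (b : ℤ) : ℤ) * t) := by
  rw [← Complex.exp_conj, map_mul, Complex.conj_I, Complex.conj_ofReal,
    ← Complex.exp_nat_mul, ← Complex.exp_nat_mul, ← Complex.exp_add]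
  congr 1
  push_cast
  ring

private lemma indicator_pi' {n : ℕ} (S : Fin n → Set ℝ) (f : Fin n → ℝ → ℂ) (θ : Fin n → ℝ) :
    (Set.univ.pi S).indicator (fun θ => ∏ j, f j (θ j)) θ = ∏ j, (S j).indicator (f j) (θ j) := by
  by_cases h : θ ∈ Set.univ.pi S
  · rw [Set.indicator_of_mem h]
    exact Finset.prod_congr rfl fun j _ => (Set.indicator_of_mem (h j trivial) _).symm
  · rw [Set.indicator_of_notMem h]
    rw [Set.mem_univ_pi, not_forall] at h
    obtain ⟨j, hj⟩ := h
    exact (Finset.prod_eq_zero (Finset.mem_univ j) (Set.indicator_of_notMem hj _)).symm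

/-- The normalization of the joint eigenvalue density of the circular unitary ensemble:
`∫_{[0,2π]^n} ∏_{1≤i<j≤n} |e^{iθ_i} - e^{iθ_j}|² dθ = (2π)^n n!`. -/
theorem stmt_12 (n : ℕ) :
    ∫ θ in Set.univ.pi fun _ : Fin n => Set.Icc (0 : ℝ) (2 * Real.pi),
      ∏ p ∈ Finset.univ.filter fun p : Fin n × Fin n => p.1 < p.2,
        ‖Complex.exp (Complex.I * (θ p.1 : ℂ)) -
          Complex.exp (Complex.I * (θ p.2 : ℂ))‖ ^ 2
    = (2 * Real.pi) ^ n * (Nat.factorial n : ℝ) := by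
  have hBc : IsCompact (Set.univ.pi fun _ : Fin n => Set.Icc (0 : ℝ) (2 * Real.pi)) :=
    isCompact_univ_pi fun _ => isCompact_Icc
  set B := Set.univ.pi fun _ : Fin n => Set.Icc (0 : ℝ) (2 * Real.pi) with hB
  set c : Equiv.Perm (Fin n) → Equiv.Perm (Fin n) → Fin n → ℤ :=
    fun σ τ j => ((σ⁻¹ j : Fin n) : ℤ) - ((τ⁻¹ j : Fin n) : ℤ) with hc
  set F : Equiv.Perm (Fin n) → Equiv.Perm (Fin n) → (Fin n → ℝ) → ℂ :=
    fun σ τ θ => ((Equiv.Perm.sign σ : ℤ) : ℂ) * ((Equiv.Perm.sign τ : ℤ) : ℂ) *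
      ∏ j, Complex.exp (Complex.I * (c σ τ j) * θ j) with hF
  have hpt : ∀ θ : Fin n → ℝ,
      ((∏ p ∈ Finset.univ.filter fun p : Fin n × Fin n => p.1 < p.2,
        ‖Complex.exp (Complex.I * (θ p.1 : ℂ)) -
          Complex.exp (Complex.I * (θ p.2 : ℂ))‖ ^ 2 : ℝ) : ℂ)
      = ∑ σ : Equiv.Perm (Fin n), ∑ τ : Equiv.Perm (Fin n), F σ τ θ := by
    intro θ
    set v : Fin n → ℂ := fun j => Complex.exp (Complex.I * (θ j : ℂ)) with hv
    have h1 : ((∏ p ∈ Finset.univ.filter fun p : Fin n × Fin n => p.1 < p.2,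
        ‖Complex.exp (Complex.I * (θ p.1 : ℂ)) -
          Complex.exp (Complex.I * (θ p.2 : ℂ))‖ ^ 2 : ℝ) : ℂ)
        = (∏ p ∈ Finset.univ.filter fun p : Fin n × Fin n => p.1 < p.2, (v p.2 - v p.1)) *
          (starRingEnd ℂ) (∏ p ∈ Finset.univ.filter fun p : Fin n × Fin n => p.1 < p.2,
            (v p.2 - v p.1)) := by
      rw [map_prod, ← Finset.prod_mul_distrib, Complex.ofReal_prod]
      refine Finset.prod_congr rfl fun p _ => ?_
      rw [Complex.mul_conj, ← Complex.sq_norm, norm_sub_rev]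
    have h2 : (∏ p ∈ Finset.univ.filter fun p : Fin n × Fin n => p.1 < p.2, (v p.2 - v p.1))
        = (Matrix.vandermonde v).det := by
      rw [Matrix.det_vandermonde, prod_pairs' (fun i j => v j - v i)]
    have h3 : (Matrix.vandermonde v).det
        = ∑ σ : Equiv.Perm (Fin n), ((Equiv.Perm.sign σ : ℤ) : ℂ) *
            ∏ j, v j ^ ((σ⁻¹ j : Fin n) : ℕ) := by
      rw [Matrix.det_apply']
      refine Finset.sum_congr rfl fun σ _ => ?_
      simp only [Matrix.vandermonde_apply]
      rw [prod_perm_pow' v σ]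
    rw [h1, h2, h3, map_sum, Finset.sum_mul_sum]
    refine Finset.sum_congr rfl fun σ _ => Finset.sum_congr rfl fun τ _ => ?_
    rw [map_mul, map_prod]
    have hsign : (starRingEnd ℂ) ((Equiv.Perm.sign τ : ℤ) : ℂ) = ((Equiv.Perm.sign τ : ℤ) : ℂ) := by
      simp
    rw [hsign, hF]
    simp only
    rw [mul_mul_mul_comm, ← Finset.prod_mul_distrib]
    congr 1
    refine Finset.prod_congr rfl fun j _ => ?_
    rw [map_pow, char_combine' (θ j)]
  have key : (∫ θ in B, ((∏ p ∈ Finset.univ.filter fun p : Fin n × Fin n => p.1 < p.2,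
        ‖Complex.exp (Complex.I * (θ p.1 : ℂ)) -
          Complex.exp (Complex.I * (θ p.2 : ℂ))‖ ^ 2 : ℝ) : ℂ))
      = (((2 * Real.pi) ^ n * (Nat.factorial n : ℝ) : ℝ) : ℂ) := by
    calc ∫ θ in B, ((∏ p ∈ Finset.univ.filter fun p : Fin n × Fin n => p.1 < p.2,
        ‖Complex.exp (Complex.I * (θ p.1 : ℂ)) -
          Complex.exp (Complex.I * (θ p.2 : ℂ))‖ ^ 2 : ℝ) : ℂ)
        = ∫ θ in B, ∑ σ : Equiv.Perm (Fin n), ∑ τ : Equiv.Perm (Fin n), F σ τ θ :=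
          integral_congr_ae (Filter.Eventually.of_forall fun θ => hpt θ)
      _ = ∑ σ : Equiv.Perm (Fin n), ∑ τ : Equiv.Perm (Fin n), ∫ θ in B, F σ τ θ := by
          rw [integral_finset_sum]
          · exact Finset.sum_congr rfl fun σ _ => integral_finset_sum _ fun τ _ =>
              (by fun_prop : Continuous (F σ τ)).continuousOn.integrableOn_compact hBc
          · intro σ _
            refine (continuous_finset_sum _ fun τ _ => ?_).continuousOn.integrableOn_compact hBc
            fun_prop
      _ = ∑ σ : Equiv.Perm (Fin n), ∑ τ : Equiv.Perm (Fin n),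
            ((Equiv.Perm.sign σ : ℤ) : ℂ) * ((Equiv.Perm.sign τ : ℤ) : ℂ) *
              (if σ = τ then ((2*Real.pi : ℝ) : ℂ)^n else 0) := by
          refine Finset.sum_congr rfl fun σ _ => Finset.sum_congr rfl fun τ _ => ?_
          rw [hF]
          simp only
          rw [integral_const_mul]
          congr 1
          rw [← integral_indicator (hBc.isClosed.measurableSet), hB]
          rw [integral_congr_ae (Filter.Eventually.of_forall
              (indicator_pi' (fun _ => Set.Icc (0:ℝ) (2*Real.pi))
                (fun j t => Complex.exp (Complex.I * (c σ τ j) * t)))),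
            MeasureTheory.volume_pi, integral_fintype_prod_eq_prod (ι := Fin n)
              (f := fun j (t : ℝ) => (Set.Icc (0:ℝ) (2*Real.pi)).indicator
                (fun t => Complex.exp (Complex.I * (c σ τ j) * t)) t)]
          have hint : ∀ j, (∫ t : ℝ, (Set.Icc (0:ℝ) (2*Real.pi)).indicator
              (fun t => Complex.exp (Complex.I * (c σ τ j) * t)) t)
              = if c σ τ j = 0 then ((2*Real.pi : ℝ) : ℂ) else 0 := fun j => by
            rw [integral_indicator measurableSet_Icc, integral_char']
          simp only [hint]
          by_cases hστ : σ = τ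
          · subst hστ
            simp [hc]
          · have : ∃ j, c σ τ j ≠ 0 := by
              by_contra hall
              push_neg at hall
              apply hστ
              have h9 : σ⁻¹ = τ⁻¹ := by
                ext j
                have hj := hall j
                rw [hc] at hj
                simp only [sub_eq_zero] at hj
                exact_mod_cast hj
              exact inv_injective h9
            obtain ⟨j, hj⟩ := this
            rw [if_neg hστ]
            exact Finset.prod_eq_zero (Finset.mem_univ j) (by rw [if_neg hj])
      _ = (((2 * Real.pi) ^ n * (Nat.factorial n : ℝ) : ℝ) : ℂ) := by
          have hs : ∀ σ : Equiv.Perm (Fin n),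
              (∑ τ : Equiv.Perm (Fin n), ((Equiv.Perm.sign σ : ℤ) : ℂ) *
                ((Equiv.Perm.sign τ : ℤ) : ℂ) *
                (if σ = τ then ((2*Real.pi : ℝ) : ℂ)^n else 0)) = ((2*Real.pi : ℝ) : ℂ)^n := by
            intro σ
            rw [Finset.sum_eq_single σ]
            · have h1 : ((Equiv.Perm.sign σ : ℤ) : ℂ) * ((Equiv.Perm.sign σ : ℤ) : ℂ) = 1 := by
                rcases Int.units_eq_one_or (Equiv.Perm.sign σ) with h | h <;> rw [h] <;> norm_num
              rw [if_pos rfl, h1, one_mul]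
            · intro τ _ hτ
              rw [if_neg (Ne.symm hτ), mul_zero]
            · intro h
              exact absurd (Finset.mem_univ σ) h
          simp only [hs, Finset.sum_const, Finset.card_univ, Fintype.card_perm, Fintype.card_fin,
            nsmul_eq_mul]
          push_cast
          ring
  have h := _root_.integral_ofReal (𝕜 := ℂ) (μ := volume.restrict B)
    (f := fun θ : Fin n → ℝ => ∏ p ∈ Finset.univ.filter fun p : Fin n × Fin n => p.1 < p.2,
      ‖Complex.exp (Complex.I * (θ p.1 : ℂ)) -
        Complex.exp (Complex.I * (θ p.2 : ℂ))‖ ^ 2)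
  exact Complex.ofReal_inj.mp ((h.symm.trans key : _))
end

section
/- Andréief's identity: for integrable functions M_1,...,M_n and N_1,...,N_n on [a,b] with weight w, the n-fold integral over the ordered simplex b ≥ x₁ ≥ ⋯ ≥ x_n ≥ a of det(M_i(x_j)) · det(N_i(x_j)) · ∏_j w(x_j) dx_j equals det(∫_a^b M_i(t) N_j(t) w(t) dt). -/
open MeasureTheory

set_option maxHeartbeats 2000000

open MeasureTheory

lemma hyperplane_null (n : ℕ) {i j : Fin n} (hij : i ≠ j) :
    (volume : Measure (Fin n → ℝ)) {x | x i = x j} = 0 := by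
  have hset : {x : Fin n → ℝ | x i = x j} =
      (LinearMap.ker ((LinearMap.proj i : (Fin n → ℝ) →ₗ[ℝ] ℝ) - LinearMap.proj j) : Set _) := by
    ext x
    simp [LinearMap.mem_ker, LinearMap.sub_apply, LinearMap.proj_apply, sub_eq_zero]
  rw [hset]
  apply Measure.addHaar_submodule
  intro htop
  have h1 : (Pi.single i (1:ℝ)) ∈ LinearMap.ker
      ((LinearMap.proj i : (Fin n → ℝ) →ₗ[ℝ] ℝ) - LinearMap.proj j) := by
    rw [htop]; trivial
  simp [LinearMap.mem_ker, LinearMap.sub_apply, LinearMap.proj_apply,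
    Pi.single_apply, hij, (Ne.symm hij)] at h1

lemma noninj_null (n : ℕ) :
    (volume : Measure (Fin n → ℝ)) {x | ¬ Function.Injective x} = 0 := by
  have hsub : {x : Fin n → ℝ | ¬ Function.Injective x} ⊆
      ⋃ (p : Fin n × Fin n) (_ : p.1 ≠ p.2), {x : Fin n → ℝ | x p.1 = x p.2} := by
    intro x hx
    simp only [Set.mem_setOf_eq, Function.Injective, not_forall] at hx
    obtain ⟨i, j, hxij, hij⟩ := hx
    exact Set.mem_iUnion.2 ⟨(i, j), Set.mem_iUnion.2 ⟨hij, hxij⟩⟩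
  refine measure_mono_null hsub (measure_iUnion_null fun p => measure_iUnion_null fun hp =>
    hyperplane_null n hp)

lemma exists_sortAnti {n : ℕ} {x : Fin n → ℝ} (hx : Function.Injective x) :
    ∃ τ : Equiv.Perm (Fin n), StrictAnti (x ∘ τ) := by
  refine ⟨Tuple.sort x * Fin.revPerm, ?_⟩
  have h1 : StrictMono (x ∘ Tuple.sort x) :=
    (Tuple.monotone_sort x).strictMono_of_injective (hx.comp (Equiv.injective _))
  have h2 : StrictAnti (fun k : Fin n => (x ∘ Tuple.sort x) (Fin.revPerm k)) := by
    intro u v huv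
    exact h1 (by simpa using Fin.rev_lt_rev.2 huv)
  intro u v huv
  exact h2 huv

lemma sortAnti_unique {n : ℕ} {x : Fin n → ℝ} {τ τ' : Equiv.Perm (Fin n)}
    (h : StrictAnti (x ∘ τ)) (h' : StrictAnti (x ∘ τ')) : τ = τ' := by
  have hg : StrictMono (fun k => τ.symm (τ' k)) := by
    intro u v huv
    have h1 : (x ∘ τ') v < (x ∘ τ') u := h' huv
    have h2 : (x ∘ τ) (τ.symm (τ' v)) < (x ∘ τ) (τ.symm (τ' u)) := by
      simpa [Function.comp] using h1
    exact h.lt_iff_gt.mp h2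
  have hid : (fun k => τ.symm (τ' k)) = id := by
    refine (StrictMono.range_inj hg strictMono_id).1 ?_
    rw [Set.range_id]
    exact Set.range_eq_univ.2 fun k => ⟨τ'.symm (τ k), by simp⟩
  ext k
  have hk := congrFun hid k
  simp only [id_eq] at hk
  have hk2 := congrArg τ hk
  exact congrArg Fin.val (by simpa using hk2.symm)

lemma rhs_det_eq (n : ℕ) (f : Fin n → Fin n → ℝ → ℝ) (hf : ∀ i j, Integrable (f i j)) :
    (Matrix.of fun i j : Fin n => ∫ t, f i j t).det
    = ∫ x : Fin n → ℝ, ∑ σ : Equiv.Perm (Fin n),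
        ((Equiv.Perm.sign σ : ℤ) : ℝ) * ∏ j, f (σ j) j (x j) := by
  simp only [Matrix.det_apply', Matrix.of_apply, Units.smul_def, zsmul_eq_mul]
  rw [integral_finset_sum _ (fun σ _ =>
    ((Integrable.fintype_prod (fun j => hf (σ j) j)).const_mul _))]
  refine Finset.sum_congr rfl fun σ _ => ?_
  rw [integral_const_mul, ← integral_fintype_prod_eq_prod (ι := Fin n) (fun j t => f (σ j) j t)]
  rfl

lemma perm_setIntegral (n : ℕ) (τ : Equiv.Perm (Fin n)) (F : (Fin n → ℝ) → ℝ)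
    (A : Set (Fin n → ℝ)) :
    ∫ y in A, F y = ∫ x in {x : Fin n → ℝ | (fun j => x (τ.symm j)) ∈ A},
      F (fun j => x (τ.symm j)) := by
  have hmp := volume_measurePreserving_piCongrLeft (fun _ : Fin n => ℝ) τ
  have hemb := (MeasurableEquiv.piCongrLeft (fun _ : Fin n => ℝ) τ).measurableEmbedding
  have hcoe : ⇑(MeasurableEquiv.piCongrLeft (fun _ : Fin n => ℝ) τ)
      = fun (x : Fin n → ℝ) (j : Fin n) => x (τ.symm j) := by
    funext x j
    conv_lhs => rw [show j = τ (τ.symm j) from (Equiv.apply_symm_apply τ j).symm]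
    rw [MeasurableEquiv.coe_piCongrLeft, Equiv.piCongrLeft_apply_apply]
  rw [← hmp.setIntegral_preimage_emb hemb F A, hcoe]
  rfl

/-- Andréief's identity: for functions `M_1, …, M_n`, `N_1, …, N_n` and a weight `w` on
`[a,b]` such that every `t ↦ M_i(t) N_j(t) w(t)` is integrable on `[a,b]`, the `n`-fold
integral over the ordered simplex `b ≥ x₁ ≥ ⋯ ≥ x_n ≥ a` of
`det(M_i(x_j)) · det(N_i(x_j)) · ∏_j w(x_j)` equals `det(∫_a^b M_i(t) N_j(t) w(t) dt)`. -/
theorem stmt_13 (n : ℕ) (a b : ℝ) (M N : Fin n → ℝ → ℝ) (w : ℝ → ℝ)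
    (hInt : ∀ i j : Fin n, IntegrableOn (fun t => M i t * N j t * w t) (Set.Icc a b)) :
    ∫ x in {x : Fin n → ℝ |
        (∀ i, x i ∈ Set.Icc a b) ∧ ∀ i j : Fin n, i ≤ j → x j ≤ x i},
      (Matrix.of fun i j : Fin n => M i (x j)).det *
        (Matrix.of fun i j : Fin n => N i (x j)).det * ∏ j, w (x j)
    = (Matrix.of fun i j : Fin n => ∫ t in Set.Icc a b, M i t * N j t * w t).det := by
  classical
  set f : Fin n → Fin n → ℝ → ℝ :=
    fun i j => (Set.Icc a b).indicator (fun t => M i t * N j t * w t) with hfdef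
  have hfInt : ∀ i j, Integrable (f i j) := fun i j =>
    (integrable_indicator_iff measurableSet_Icc).2 (hInt i j)
  set c : Equiv.Perm (Fin n) → ℝ := fun σ => ((Equiv.Perm.sign σ : ℤ) : ℝ) with hcdef
  set A : Equiv.Perm (Fin n) → Set (Fin n → ℝ) :=
    fun τ => {x : Fin n → ℝ | StrictAnti (x ∘ τ)} with hAdef
  set G : (Fin n → ℝ) → ℝ := fun x =>
    (Matrix.of fun i j : Fin n => M i (x j)).det *
      (Matrix.of fun i j : Fin n => N i (x j)).det * ∏ j, w (x j) with hGdef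
  set cube : Set (Fin n → ℝ) := Set.univ.pi fun _ : Fin n => Set.Icc a b with hcubedef
  have hcube_meas : MeasurableSet cube := MeasurableSet.univ_pi fun _ => measurableSet_Icc
  have hAmeas : ∀ τ, MeasurableSet (A τ) := by
    intro τ
    have hAτ : A τ = ⋂ (p : Fin n × Fin n) (_ : p.1 < p.2),
        {x : Fin n → ℝ | x (τ p.2) < x (τ p.1)} := by
      ext x
      simp only [hAdef, Set.mem_iInter, Set.mem_setOf_eq]
      exact ⟨fun hx p hp => hx hp, fun hx u v huv => hx (u, v) huv⟩
    rw [hAτ]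
    exact MeasurableSet.iInter fun p => MeasurableSet.iInter fun _ =>
      measurableSet_lt (measurable_pi_apply _) (measurable_pi_apply _)
  have hFInt : Integrable (fun x : Fin n → ℝ =>
      ∑ σ : Equiv.Perm (Fin n), c σ * ∏ j, f (σ j) j (x j)) :=
    integrable_finset_sum _ fun σ _ =>
      (Integrable.fintype_prod fun j => hfInt (σ j) j).const_mul _
  -- Step 1 : the determinant of integrals as a single integral
  have h1 : (Matrix.of fun i j : Fin n => ∫ t in Set.Icc a b, M i t * N j t * w t).det
      = ∫ x : Fin n → ℝ, ∑ σ : Equiv.Perm (Fin n), c σ * ∏ j, f (σ j) j (x j) := by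
    have hent : ∀ i j : Fin n, (∫ t in Set.Icc a b, M i t * N j t * w t) = ∫ t, f i j t :=
      fun i j => (integral_indicator measurableSet_Icc).symm
    simp only [hent]
    exact rhs_det_eq n f hfInt
  -- Step 2 : decompose the integral into the sectors A τ
  have h2 : (∫ x : Fin n → ℝ, ∑ σ : Equiv.Perm (Fin n), c σ * ∏ j, f (σ j) j (x j))
      = ∑ τ : Equiv.Perm (Fin n), ∫ x in A τ,
          ∑ σ : Equiv.Perm (Fin n), c σ * ∏ j, f (σ j) j (x j) := by
    have hAdisj : (↑(Finset.univ : Finset (Equiv.Perm (Fin n))) : Set (Equiv.Perm (Fin n))).Pairwise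
        (Function.onFun Disjoint A) := by
      intro τ _ τ' _ hne
      exact Set.disjoint_left.2 fun x hx hx' => hne (sortAnti_unique hx hx')
    have hae : (Set.univ : Set (Fin n → ℝ)) =ᵐ[volume] ⋃ τ ∈ Finset.univ, A τ := by
      have hcompl : (⋃ τ ∈ (Finset.univ : Finset (Equiv.Perm (Fin n))), A τ)ᶜ ⊆
          {x : Fin n → ℝ | ¬ Function.Injective x} := by
        intro x hx
        by_contra hinj
        simp only [Set.mem_setOf_eq, not_not] at hinj
        obtain ⟨τ, hτ⟩ := exists_sortAnti hinj
        exact hx (Set.mem_biUnion (Finset.mem_univ τ) hτ)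
      exact ((ae_eq_univ).2 (measure_mono_null hcompl (noninj_null n))).symm
    calc (∫ x : Fin n → ℝ, ∑ σ : Equiv.Perm (Fin n), c σ * ∏ j, f (σ j) j (x j))
        = ∫ x in (Set.univ : Set (Fin n → ℝ)), ∑ σ : Equiv.Perm (Fin n), c σ * ∏ j, f (σ j) j (x j) :=
          setIntegral_univ.symm
      _ = ∫ x in ⋃ τ ∈ Finset.univ, A τ,
            ∑ σ : Equiv.Perm (Fin n), c σ * ∏ j, f (σ j) j (x j) :=
          setIntegral_congr_set hae
      _ = ∑ τ : Equiv.Perm (Fin n), ∫ x in A τ,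
            ∑ σ : Equiv.Perm (Fin n), c σ * ∏ j, f (σ j) j (x j) :=
          integral_biUnion_finset _ (fun τ _ => hAmeas τ) hAdisj
            (fun τ _ => hFInt.integrableOn)
  -- Step 3 : change of variables in each sector
  have h3 : ∀ τ : Equiv.Perm (Fin n),
      (∫ x in A τ, ∑ σ : Equiv.Perm (Fin n), c σ * ∏ j, f (σ j) j (x j))
      = ∫ x in A 1, c τ * ∑ σ : Equiv.Perm (Fin n), c σ * ∏ k, f (σ k) (τ k) (x k) := by
    intro τ
    have hset : {x : Fin n → ℝ | (fun j => x (τ.symm j)) ∈ A τ} = A 1 := by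
      ext x
      simp only [hAdef, Set.mem_setOf_eq]
      constructor
      · intro hx u v huv
        have := hx huv
        simpa using this
      · intro hx u v huv
        have : (x ∘ ⇑(1 : Equiv.Perm (Fin n))) (τ.symm (τ v)) <
            (x ∘ ⇑(1 : Equiv.Perm (Fin n))) (τ.symm (τ u)) := by
          simpa using hx (show τ.symm (τ u) < τ.symm (τ v) by simpa using huv)
        simpa using this
    have hpt : ∀ x : Fin n → ℝ,
        (∑ σ : Equiv.Perm (Fin n), c σ * ∏ j, f (σ j) j (x (τ.symm j)))
        = c τ * ∑ σ : Equiv.Perm (Fin n), c σ * ∏ k, f (σ k) (τ k) (x k) := by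
      intro x
      rw [Finset.mul_sum,
        ← Equiv.sum_comp (Equiv.mulRight τ⁻¹)
          (fun σ : Equiv.Perm (Fin n) => c σ * ∏ j, f (σ j) j (x (τ.symm j)))]
      refine Finset.sum_congr rfl fun σ _ => ?_
      rw [show ((Equiv.mulRight τ⁻¹) σ) = σ * τ⁻¹ from rfl,
        ← Equiv.prod_comp τ (fun j => f ((σ * τ⁻¹) j) j (x (τ.symm j)))]
      simp only [hcdef, Equiv.Perm.mul_apply, Equiv.Perm.inv_def,
        Equiv.symm_apply_apply, Equiv.Perm.sign_mul, Equiv.Perm.sign_inv, Equiv.Perm.sign_symm,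
        Units.val_mul, Int.cast_mul]
      ring
    rw [perm_setIntegral n τ _ (A τ), hset]
    exact setIntegral_congr_fun (hAmeas 1) fun x _ => hpt x
  -- Step 4 : sum over sectors gives the double determinant
  have h4 : (∑ τ : Equiv.Perm (Fin n), ∫ x in A 1,
        c τ * ∑ σ : Equiv.Perm (Fin n), c σ * ∏ k, f (σ k) (τ k) (x k))
      = ∫ x in A 1, cube.indicator G x := by
    have hsplit : ∀ (i j : Fin n) (t : ℝ), f i j t
        = M i t * (N j t * ((Set.Icc a b).indicator (fun _ => (1:ℝ)) t * w t)) := by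
      intro i j t
      by_cases ht : t ∈ Set.Icc a b
      · simp only [hfdef, Set.indicator_of_mem ht]
        ring
      · simp [hfdef, Set.indicator_of_notMem ht]
    have hpt2 : ∀ x : Fin n → ℝ,
        (∑ τ : Equiv.Perm (Fin n), c τ * ∑ σ : Equiv.Perm (Fin n),
          c σ * ∏ k, f (σ k) (τ k) (x k))
        = cube.indicator G x := by
      intro x
      by_cases hx : ∀ k, x k ∈ Set.Icc a b
      · have hmem : x ∈ cube := fun k _ => hx k
        rw [Set.indicator_of_mem hmem]
        have hprodsplit : ∀ σ τ : Equiv.Perm (Fin n), (∏ k, f (σ k) (τ k) (x k))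
            = (∏ k, M (σ k) (x k)) * ((∏ k, N (τ k) (x k)) * ∏ k, w (x k)) := by
          intro σ τ
          rw [← Finset.prod_mul_distrib, ← Finset.prod_mul_distrib]
          refine Finset.prod_congr rfl fun k _ => ?_
          rw [hsplit (σ k) (τ k) (x k), Set.indicator_of_mem (hx k)]
          ring
        simp only [hprodsplit, hGdef, Matrix.det_apply', Matrix.of_apply, Units.smul_def,
          zsmul_eq_mul, hcdef, Finset.mul_sum, Finset.sum_mul]
        exact Finset.sum_congr rfl fun σ _ => Finset.sum_congr rfl fun τ _ => by ring
      · push_neg at hx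
        obtain ⟨k0, hk0⟩ := hx
        have hmem : x ∉ cube := fun h => hk0 (h k0 (Set.mem_univ k0))
        rw [Set.indicator_of_notMem hmem]
        have hz : ∀ σ τ : Equiv.Perm (Fin n), (∏ k, f (σ k) (τ k) (x k)) = 0 := fun σ τ =>
          Finset.prod_eq_zero (Finset.mem_univ k0)
            (by simp [hfdef, Set.indicator_of_notMem hk0])
        simp [hz]
    rw [← integral_finset_sum _ (fun τ _ =>
      (((integrable_finset_sum _ fun σ _ =>
        (Integrable.fintype_prod fun k => hfInt (σ k) (τ k)).const_mul _).const_mul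
          (c τ)).integrableOn))]
    exact setIntegral_congr_fun (hAmeas 1) fun x _ => hpt2 x
  -- Step 5 : identify with the integral over the ordered simplex
  have h5 : (∫ x in A 1, cube.indicator G x)
      = ∫ x in {x : Fin n → ℝ |
          (∀ i, x i ∈ Set.Icc a b) ∧ ∀ i j : Fin n, i ≤ j → x j ≤ x i}, G x := by
    rw [setIntegral_indicator hcube_meas]
    refine setIntegral_congr_set ?_
    rw [MeasureTheory.ae_eq_set]
    constructor
    · have hsub : (A 1 ∩ cube) \ {x : Fin n → ℝ |
          (∀ i, x i ∈ Set.Icc a b) ∧ ∀ i j : Fin n, i ≤ j → x j ≤ x i} = ∅ := by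
        rw [Set.diff_eq_empty]
        rintro x ⟨hx1, hxc⟩
        refine ⟨fun i => hxc i (Set.mem_univ i), fun i j hij => ?_⟩
        rcases eq_or_lt_of_le hij with h | h
        · rw [h]
        · exact le_of_lt (hx1 h)
      rw [hsub]
      simp
    · refine measure_mono_null ?_ (noninj_null n)
      rintro x ⟨⟨hxc, hxord⟩, hnot⟩
      show ¬ Function.Injective x
      intro hinj
      apply hnot
      refine ⟨?_, fun i _ => hxc i⟩
      intro i j hij
      have hle : x ((1 : Equiv.Perm (Fin n)) j) ≤ x ((1 : Equiv.Perm (Fin n)) i) := by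
        simpa using hxord i j hij.le
      refine lt_of_le_of_ne hle fun h => ?_
      exact absurd (hinj (by simpa using h)) hij.ne'
  calc (∫ x in {x : Fin n → ℝ |
          (∀ i, x i ∈ Set.Icc a b) ∧ ∀ i j : Fin n, i ≤ j → x j ≤ x i}, G x)
      = ∫ x in A 1, cube.indicator G x := h5.symm
    _ = ∑ τ : Equiv.Perm (Fin n), ∫ x in A 1,
          c τ * ∑ σ : Equiv.Perm (Fin n), c σ * ∏ k, f (σ k) (τ k) (x k) := h4.symm
    _ = ∑ τ : Equiv.Perm (Fin n), ∫ x in A τ,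
          ∑ σ : Equiv.Perm (Fin n), c σ * ∏ j, f (σ j) j (x j) :=
        Finset.sum_congr rfl fun τ _ => (h3 τ).symm
    _ = ∫ x : Fin n → ℝ, ∑ σ : Equiv.Perm (Fin n), c σ * ∏ j, f (σ j) j (x j) := h2.symm
    _ = (Matrix.of fun i j : Fin n => ∫ t in Set.Icc a b, M i t * N j t * w t).det := h1.symm
end

section
/- Wendel's inequality: for all real x > 0 and a ∈ [0,1], x·(x+a)^{a-1} ≤ Γ(x+a)/Γ(x) ≤ x^a; consequently lim_{x→∞} Γ(x+α)/(Γ(x) x^α) = 1 for every fixed real α ≥ 0. -/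
open Real Filter

lemma wendel_upper (x : ℝ) (hx : 0 < x) (a : ℝ) (ha0 : 0 ≤ a) (ha1 : a ≤ 1) :
    Real.Gamma (x + a) ≤ Real.Gamma x * x ^ a := by
  rcases eq_or_lt_of_le ha0 with h0 | h0
  · simp [← h0]
  rcases eq_or_lt_of_le ha1 with h1 | h1
  · rw [h1, Real.rpow_one, Real.Gamma_add_one hx.ne', mul_comm]
  have key := Real.Gamma_mul_add_mul_le_rpow_Gamma_mul_rpow_Gamma hx (by linarith : (0:ℝ) < x + 1)
      (by linarith : (0:ℝ) < 1 - a) h0 (by ring)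
  have hGx : 0 < Real.Gamma x := Real.Gamma_pos_of_pos hx
  calc Real.Gamma (x + a) = Real.Gamma ((1 - a) * x + a * (x + 1)) := by ring_nf
    _ ≤ Real.Gamma x ^ (1 - a) * Real.Gamma (x + 1) ^ a := key
    _ = Real.Gamma x ^ (1 - a) * (Real.Gamma x ^ a * x ^ a) := by
        rw [Real.Gamma_add_one hx.ne', Real.mul_rpow hx.le hGx.le]; ring
    _ = Real.Gamma x * x ^ a := by
        rw [← mul_assoc, ← Real.rpow_add hGx]; norm_num

lemma wendel (x : ℝ) (hx : 0 < x) (a : ℝ) (ha0 : 0 ≤ a) (ha1 : a ≤ 1) :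
    x * (x + a) ^ (a - 1) ≤ Real.Gamma (x + a) / Real.Gamma x ∧
      Real.Gamma (x + a) / Real.Gamma x ≤ x ^ a := by
  have hGx : 0 < Real.Gamma x := Real.Gamma_pos_of_pos hx
  have hxa : 0 < x + a := by linarith
  constructor
  · -- apply upper with x' = x + a, a' = 1 - a
    have h := wendel_upper (x + a) hxa (1 - a) (by linarith) (by linarith)
    rw [show x + a + (1 - a) = x + 1 by ring, Real.Gamma_add_one hx.ne'] at h
    rw [le_div_iff₀ hGx]
    have hp : (0:ℝ) ≤ (x + a) ^ (a - 1) := (Real.rpow_pos_of_pos hxa _).le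
    calc x * (x + a) ^ (a - 1) * Real.Gamma x
        = x * Real.Gamma x * (x + a) ^ (a - 1) := by ring
      _ ≤ Real.Gamma (x + a) * (x + a) ^ (1 - a) * (x + a) ^ (a - 1) :=
          mul_le_mul_of_nonneg_right h hp
      _ = Real.Gamma (x + a) := by
          rw [mul_assoc, ← Real.rpow_add hxa]; norm_num
  · rw [div_le_iff₀ hGx, mul_comm (x ^ a)]
    exact wendel_upper x hx a ha0 ha1

lemma tendsto_add_div_self (c : ℝ) :
    Tendsto (fun x : ℝ => (x + c) / x) atTop (nhds 1) := by
  have : Tendsto (fun x : ℝ => 1 + c * x⁻¹) atTop (nhds (1 + c * 0)) :=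
    tendsto_const_nhds.add (tendsto_const_nhds.mul tendsto_inv_atTop_zero)
  rw [mul_zero, add_zero] at this
  refine this.congr' ?_
  filter_upwards [eventually_gt_atTop (0:ℝ)] with x hx
  field_simp

lemma base_case (b : ℝ) (hb0 : 0 ≤ b) (hb1 : b ≤ 1) :
    Tendsto (fun x : ℝ => Real.Gamma (x + b) / (Real.Gamma x * x ^ b)) atTop (nhds 1) := by
  have hlo : Tendsto (fun x : ℝ => (x / (x + b)) ^ (1 - b)) atTop (nhds 1) := by
    have h1 : Tendsto (fun x : ℝ => x / (x + b)) atTop (nhds 1) := by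
      have := (tendsto_add_div_self b).inv₀ one_ne_zero
      rw [inv_one] at this
      refine this.congr' ?_
      filter_upwards [eventually_gt_atTop (0:ℝ)] with x hx
      rw [← one_div, one_div_div]
    have hc : ContinuousAt (fun t : ℝ => t ^ (1 - b)) 1 :=
      Real.continuousAt_rpow_const 1 (1 - b) (Or.inl one_ne_zero)
    have := hc.tendsto.comp h1
    simpa [Function.comp_def] using this
  refine tendsto_of_tendsto_of_tendsto_of_le_of_le' hlo tendsto_const_nhds ?_ ?_
  · filter_upwards [eventually_gt_atTop (0:ℝ)] with x hx
    have hxa : 0 < x + b := by linarith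
    have hGx : 0 < Real.Gamma x := Real.Gamma_pos_of_pos hx
    have hxb : 0 < x ^ b := Real.rpow_pos_of_pos hx _
    have h := (wendel x hx b hb0 hb1).1
    rw [div_mul_eq_div_div, le_div_iff₀ hxb]
    calc (x / (x + b)) ^ (1 - b) * x ^ b
        = x ^ (1 - b) * (x + b) ^ (b - 1) * x ^ b := by
          rw [Real.div_rpow hx.le hxa.le, div_eq_mul_inv, ← Real.rpow_neg hxa.le]
          ring_nf
      _ = x * (x + b) ^ (b - 1) := by
          rw [mul_right_comm, ← Real.rpow_add hx]; norm_num
      _ ≤ Real.Gamma (x + b) / Real.Gamma x := h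
  · filter_upwards [eventually_gt_atTop (0:ℝ)] with x hx
    have hGx : 0 < Real.Gamma x := Real.Gamma_pos_of_pos hx
    have hxb : 0 < x ^ b := Real.rpow_pos_of_pos hx _
    have h := (wendel x hx b hb0 hb1).2
    rw [div_mul_eq_div_div, div_le_one hxb]
    exact h

lemma step_case (b : ℝ) (hb0 : 0 ≤ b) (hb1 : b ≤ 1) : ∀ n : ℕ,
    Tendsto (fun x : ℝ => Real.Gamma (x + (b + n)) / (Real.Gamma x * x ^ (b + n)))
      atTop (nhds 1) := by
  intro n
  induction n with
  | zero => simpa using base_case b hb0 hb1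
  | succ n ih =>
    have h2 := tendsto_add_div_self (b + n)
    have := ih.mul h2
    rw [mul_one] at this
    refine this.congr' ?_
    filter_upwards [eventually_gt_atTop (0:ℝ)] with x hx
    have hxbn : (0:ℝ) < x + (b + n) := by positivity
    have e1 : x + (b + (n + 1 : ℕ)) = (x + (b + n)) + 1 := by push_cast; ring
    rw [e1, Real.Gamma_add_one hxbn.ne']
    have e2 : (b + (n + 1 : ℕ) : ℝ) = (b + n) + 1 := by push_cast; ring
    rw [e2, Real.rpow_add_one hx.ne']
    have hGx : 0 < Real.Gamma x := Real.Gamma_pos_of_pos hx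
    have hxb : 0 < x ^ (b + (n:ℝ)) := Real.rpow_pos_of_pos hx _
    field_simp

/-- Wendel's inequality: for all real `x > 0` and `a ∈ [0,1]`,
`x (x+a)^{a-1} ≤ Γ(x+a)/Γ(x) ≤ x^a`; consequently
`lim_{x→∞} Γ(x+α)/(Γ(x) x^α) = 1` for every fixed real `α ≥ 0`. -/
theorem stmt_18 :
    (∀ x : ℝ, 0 < x → ∀ a ∈ Set.Icc (0 : ℝ) 1,
      x * (x + a) ^ (a - 1) ≤ Real.Gamma (x + a) / Real.Gamma x ∧
        Real.Gamma (x + a) / Real.Gamma x ≤ x ^ a) ∧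
    ∀ α : ℝ, 0 ≤ α →
      Filter.Tendsto (fun x : ℝ => Real.Gamma (x + α) / (Real.Gamma x * x ^ α))
        Filter.atTop (nhds 1) := by
  constructor
  · intro x hx a ha
    exact wendel x hx a ha.1 ha.2
  · intro α hα
    set n := ⌊α⌋₊ with hn
    have hb0 : 0 ≤ α - n := sub_nonneg.2 (Nat.floor_le hα)
    have hb1 : α - n ≤ 1 := by
      have := Nat.lt_floor_add_one α
      linarith
    have := step_case (α - n) hb0 hb1 n
    simpa using this
end
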